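/- (Jump lemma for preemptive scheduling, Lemma 4.9.) Let s_f, P_f, s_i, P_i, T', T'' be real numbers and γ', γ'' real numbers with s_f + P_f ≥ s_i + P_i > 0, T' > 0, T'' > 0, γ' + 2 > 0, γ'' + 2 > 0, T' = 2(s_f + P_f)/(γ' + 2), T'' = 2(s_i + P_i)/(γ'' + 2), and T'' ≤ T'. Then 2(s_i + P_i)/(γ'' + 3) ≤ 2(s_f + P_f)/(γ' + 3). -/

import Mathlib

/-- Jump lemma for preemptive scheduling (Lemma 4.9): if `T' = 2(s_f+P_f)/(γ'+2)` is a jump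
of a fastest jumping class `f` (i.e. `s_f + P_f ≥ s_i + P_i`) and `T'' = 2(s_i+P_i)/(γ''+2)`
is a jump of a different class `i` with `T'' ≤ T'`, then the next jump of class `i` is at
most the next jump of `f`. -/
theorem preemptive_jump_lemma (sf Pf si Pi γ' γ'' T' T'' : ℝ)
    (hpos : 0 < si + Pi) (hfast : si + Pi ≤ sf + Pf)
    (hT' : 0 < T') (hT'' : 0 < T'')
    (hγ' : 0 < γ' + 2) (hγ'' : 0 < γ'' + 2)
    (hjump' : T' = 2 * (sf + Pf) / (γ' + 2))
    (hjump'' : T'' = 2 * (si + Pi) / (γ'' + 2))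
    (hle : T'' ≤ T') :
    2 * (si + Pi) / (γ'' + 3) ≤ 2 * (sf + Pf) / (γ' + 3) := by
  have hA : 0 < sf + Pf := lt_of_lt_of_le hpos hfast
  have h1 : T' * (γ' + 2) = 2 * (sf + Pf) := by
    field_simp [hγ'.ne'] at hjump'; linarith
  have h2 : T'' * (γ'' + 2) = 2 * (si + Pi) := by
    field_simp [hγ''.ne'] at hjump''; linarith
  have h3 : (0:ℝ) < γ' + 3 := by linarith
  have h4 : (0:ℝ) < γ'' + 3 := by linarith
  rw [div_le_div_iff₀ h4 h3]
  have hTT : 0 < T' * T'' := mul_pos hT' hT''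
  have e1 : 2 * (si + Pi) * (γ' + 3) * (T' * T'') =
      2 * (si + Pi) * T'' * (T' * (γ' + 2)) + 2 * (si + Pi) * (T' * T'') := by ring
  have e2 : 2 * (sf + Pf) * (γ'' + 3) * (T' * T'') =
      2 * (sf + Pf) * T' * (T'' * (γ'' + 2)) + 2 * (sf + Pf) * (T' * T'') := by ring
  rw [h1] at e1
  rw [h2] at e2
  rw [← mul_le_mul_iff_of_pos_right hTT]
  have k1 : 2 * (si + Pi) * T'' * (2 * (sf + Pf)) ≤ 2 * (sf + Pf) * T' * (2 * (si + Pi)) := by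
    nlinarith [mul_pos hpos hA]
  have k2 : 2 * (si + Pi) * (T' * T'') ≤ 2 * (sf + Pf) * (T' * T'') := by
    nlinarith
  linarith [e1, e2]
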